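/- For the measurement Jacobian H = [0₃, I₃, 0₃, I₃] and state transition Φ = [[I,0,0,0],[g^Δt,I,0,0],[(1/2)g^Δt², IΔt, I, 0],[0,0,0,e^{−αΔt}I]] with g = (0,0,−g₀)ᵀ, g₀ ≠ 0, α ≠ 0, Δt ≠ 0, the unobservable subspace (the kernel of the stacked observability matrix with rows HΦᵏ, k ≥ 0) is exactly 4-dimensional: it consists of vectors (ξ_R, ξ_v, ξ_p, ξ_u) with ξ_p ∈ ℝ³ arbitrary, ξ_v = 0, ξ_u = 0, and ξ_R parallel to g. -/

import Mathlib

open Matrix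
noncomputable def skew (w : Fin 3 → ℝ) : Matrix (Fin 3) (Fin 3) ℝ :=
  !![0, -w 2, w 1; w 2, 0, -w 0; -w 1, w 0, 0]
/-- The discrete state transition matrix `Φ` (3×3 blocks):
`[[I,0,0,0],[g^Δt,I,0,0],[(1/2)g^Δt², IΔt, I, 0],[0,0,0,e^{−αΔt}I]]`. -/
noncomputable def Phi (g : Fin 3 → ℝ) (α Δt : ℝ) :
    Matrix ((Fin 3 ⊕ Fin 3) ⊕ (Fin 3 ⊕ Fin 3)) ((Fin 3 ⊕ Fin 3) ⊕ (Fin 3 ⊕ Fin 3)) ℝ :=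
  Matrix.fromBlocks
    (Matrix.fromBlocks 1 0 (Δt • skew g) 1) 0
    (Matrix.fromBlocks ((Δt ^ 2 / 2) • skew g) (Δt • 1) 0 0)
    (Matrix.fromBlocks 1 0 0 (Real.exp (-α * Δt) • 1))
/-- The measurement Jacobian `H = [0₃, I₃, 0₃, I₃]`. -/
noncomputable def Hmat : Matrix (Fin 3) ((Fin 3 ⊕ Fin 3) ⊕ (Fin 3 ⊕ Fin 3)) ℝ :=
  Matrix.fromCols (Matrix.fromCols 0 1) (Matrix.fromCols 0 1)

lemma phi_mulVec (g : Fin 3 → ℝ) (α Δt : ℝ) (a b c d : Fin 3 → ℝ) :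
    Phi g α Δt *ᵥ Sum.elim (Sum.elim a b) (Sum.elim c d) =
    Sum.elim (Sum.elim a (Δt • (skew g *ᵥ a) + b))
      (Sum.elim ((Δt ^ 2 / 2) • (skew g *ᵥ a) + Δt • b + c)
        (Real.exp (-α * Δt) • d)) := by
  simp [Phi, Matrix.fromBlocks_mulVec, Matrix.smul_mulVec]
  funext i; rcases i with i|i <;> [skip; rcases i with j|j] <;> simp

lemma H_mulVec (a b c d : Fin 3 → ℝ) :
    Hmat *ᵥ Sum.elim (Sum.elim a b) (Sum.elim c d) = b + d := by
  simp [Hmat, Matrix.fromCols_mulVec_sumElim]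

/-- The unobservable subspace (kernel of the stacked observability matrix) is exactly:
`ξ_v = 0`, `ξ_u = 0`, `ξ_R` parallel to `g`, and `ξ_p` arbitrary. -/
theorem t6 (g₀ α Δt : ℝ) (hg₀ : g₀ ≠ 0) (hα : α ≠ 0) (hΔt : Δt ≠ 0)
    (g : Fin 3 → ℝ) (hg : g = ![0, 0, -g₀])
    (ξ : (Fin 3 ⊕ Fin 3) ⊕ (Fin 3 ⊕ Fin 3) → ℝ) :
    (∀ k : ℕ, Hmat *ᵥ ((Phi g α Δt) ^ k *ᵥ ξ) = 0) ↔
      ((fun i => ξ (Sum.inl (Sum.inr i))) = 0 ∧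
       (fun i => ξ (Sum.inr (Sum.inr i))) = 0 ∧
       ∃ c : ℝ, (fun i => ξ (Sum.inl (Sum.inl i))) = c • g) := by
  set a : Fin 3 → ℝ := fun i => ξ (Sum.inl (Sum.inl i)) with ha
  set b : Fin 3 → ℝ := fun i => ξ (Sum.inl (Sum.inr i)) with hb
  set c : Fin 3 → ℝ := fun i => ξ (Sum.inr (Sum.inl i)) with hc
  set d : Fin 3 → ℝ := fun i => ξ (Sum.inr (Sum.inr i)) with hd
  have hξ : ξ = Sum.elim (Sum.elim a b) (Sum.elim c d) := by
    funext i; rcases i with i|i <;> rcases i with j|j <;> rfl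
  set e : ℝ := Real.exp (-α * Δt) with he
  have he1 : e ≠ 1 := by
    rw [he, Ne, Real.exp_eq_one_iff]
    intro h
    rcases mul_eq_zero.mp h with h'|h'
    · exact hα (neg_eq_zero.mp h')
    · exact hΔt h'
  constructor
  · intro hk
    have h0 := hk 0
    have h1 := hk 1
    have h2 := hk 2
    rw [pow_zero, one_mulVec, hξ, H_mulVec] at h0
    rw [pow_one, hξ, phi_mulVec, H_mulVec] at h1
    have hsq : (Phi g α Δt) ^ 2 *ᵥ ξ = Phi g α Δt *ᵥ (Phi g α Δt *ᵥ ξ) := by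
      rw [pow_two, ← mulVec_mulVec]
    rw [hsq, hξ, phi_mulVec, phi_mulVec, H_mulVec] at h2
    -- component equations
    have key : ∀ i, d i = 0 ∧ b i = 0 ∧ (skew g *ᵥ a) i = 0 := by
      intro i
      have e0 := congrFun h0 i
      have e1 := congrFun h1 i
      have e2 := congrFun h2 i
      simp [Pi.add_apply, Pi.smul_apply, smul_eq_mul] at e0 e1 e2
      rw [show -(α * Δt) = -α * Δt by ring, ← he] at e1 e2
      have hdi : d i = 0 := by
        have h3 : (e - 1) ^ 2 * d i = 0 := by nlinarith [e0, e1, e2]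
        have : (e - 1) ^ 2 ≠ 0 := pow_ne_zero _ (sub_ne_zero.mpr he1)
        exact (mul_eq_zero.mp h3).resolve_left this
      have hbi : b i = 0 := by linarith [e0, hdi]
      refine ⟨hdi, hbi, ?_⟩
      have : Δt * (skew g *ᵥ a) i = 0 := by
        have := e1; rw [hdi, hbi] at this; linarith
      exact (mul_eq_zero.mp this).resolve_left hΔt
    have hd0 : d = 0 := funext fun i => (key i).1
    have hb0 : b = 0 := funext fun i => (key i).2.1
    have hSa : skew g *ᵥ a = 0 := funext fun i => (key i).2.2
    refine ⟨hb0, hd0, -(a 2) / g₀, ?_⟩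
    have s0 := congrFun hSa 0
    have s1 := congrFun hSa 1
    have ha0 : a 1 = 0 := by
      simp [skew, hg, Matrix.mulVec, dotProduct, Fin.sum_univ_three] at s0
      rcases s0 with h|h; · exact absurd h hg₀
      · exact h
    have ha1 : a 0 = 0 := by
      simp [skew, hg, Matrix.mulVec, dotProduct, Fin.sum_univ_three] at s1
      rcases s1 with h|h; · exact absurd h hg₀
      · exact h
    funext i
    fin_cases i <;>
      simp [hg, ha0, ha1, Pi.smul_apply, smul_eq_mul] <;>
      field_simp
  · rintro ⟨hb0, hd0, cst, hcst⟩
    have hSa : skew g *ᵥ a = 0 := by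
      rw [hcst]
      funext i
      fin_cases i <;>
        simp [skew, hg, Matrix.mulVec, dotProduct, Fin.sum_univ_three] <;> ring
    have hfix : Phi g α Δt *ᵥ ξ = ξ := by
      rw [hξ, phi_mulVec, hSa, hb0, hd0]
      simp
    have hpow : ∀ k : ℕ, (Phi g α Δt) ^ k *ᵥ ξ = ξ := by
      intro k
      induction k with
      | zero => simp
      | succ n ih => rw [pow_succ, ← mulVec_mulVec, hfix, ih]
    intro k
    rw [hpow k, hξ, H_mulVec, hb0, hd0, add_zero]
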